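/- arXiv:math/0110176 — 3 statements merged into one kernel-verified Lean document; each statement's English description precedes it below -/
import Mathlib

section
/- A generalized Baumslag–Solitar group G that is not isomorphic to ℤ is not a free group. -/
open SimpleGraph

section Defs

variable {G V : Type} [Group G]

/-- The action `ρ` preserves adjacency of the graph `X`. -/
def PreservesAdj (X : SimpleGraph V) (ρ : G →* Equiv.Perm V) : Prop :=
  ∀ (g : G) (u v : V), X.Adj u v → X.Adj (ρ g u) (ρ g v)

/-- The action is without inversions: no element swaps the endpoints of an edge. -/
def NoInversions (X : SimpleGraph V) (ρ : G →* Equiv.Perm V) : Prop :=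
  ∀ (g : G) (u v : V), X.Adj u v → ¬(ρ g u = v ∧ ρ g v = u)

/-- `X` together with `ρ` is a `G`-tree: a tree with a `G`-action by graph
automorphisms, without inversions. -/
def IsGTree (X : SimpleGraph V) (ρ : G →* Equiv.Perm V) : Prop :=
  X.IsTree ∧ PreservesAdj X ρ ∧ NoInversions X ρ

/-- The stabilizer of a vertex. -/
def vStab (ρ : G →* Equiv.Perm V) (v : V) : Subgroup G :=
  (MulAction.stabilizer (Equiv.Perm V) v).comap ρ

/-- The stabilizer of an edge (for an action without inversions this is the
intersection of the stabilizers of the two endpoints). -/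
def eStab (ρ : G →* Equiv.Perm V) (u v : V) : Subgroup G :=
  vStab ρ u ⊓ vStab ρ v

/-- An element is elliptic if it fixes a vertex; it is hyperbolic otherwise. -/
def Elliptic (ρ : G →* Equiv.Perm V) (γ : G) : Prop := ∃ v : V, ρ γ v = v

/-- A (bi-infinite) line in a graph. -/
def IsLine (X : SimpleGraph V) (L : Set V) : Prop :=
  ∃ f : ℤ → V, Function.Injective f ∧ (∀ n : ℤ, X.Adj (f n) (f (n + 1))) ∧ L = Set.range f

/-- A set of vertices invariant under the element `γ`. -/
def InvariantSet (ρ : G →* Equiv.Perm V) (γ : G) (L : Set V) : Prop :=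
  ⇑(ρ γ) '' L = L

/-- An axis for `γ` : a `γ`-invariant line. (A hyperbolic element has a unique one.) -/
def IsAxis (X : SimpleGraph V) (ρ : G →* Equiv.Perm V) (γ : G) (L : Set V) : Prop :=
  IsLine X L ∧ InvariantSet ρ γ L

/-- A subgroup is infinite cyclic. -/
def IsInfCyclic {G : Type} [Group G] (H : Subgroup G) : Prop := IsCyclic H ∧ Infinite H

/-- A generalized Baumslag–Solitar tree: a `G`-tree all of whose vertex and edge
stabilizers are infinite cyclic. -/
def IsGBSTree (X : SimpleGraph V) (ρ : G →* Equiv.Perm V) : Prop :=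
  IsGTree X ρ ∧ (∀ v : V, IsInfCyclic (vStab ρ v)) ∧
    (∀ u v : V, X.Adj u v → IsInfCyclic (eStab ρ u v))

/-- Two group elements are commensurable: some nonzero powers of them coincide. -/
def CommElts (γ δ : G) : Prop := ∃ m n : ℤ, m ≠ 0 ∧ n ≠ 0 ∧ γ ^ m = δ ^ n

/-- A generalized Baumslag–Solitar group: a group admitting a GBS tree. -/
def IsGBSGroup (G : Type) [Group G] : Prop :=
  ∃ (V : Type) (X : SimpleGraph V) (ρ : G →* Equiv.Perm V), IsGBSTree X ρ

/-- A group is free: isomorphic to a free group on some set. -/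
def IsFreeGrp (G : Type) [Group G] : Prop := ∃ ι : Type, Nonempty (G ≃* FreeGroup ι)

/-- The orbit of the edge `{a, b}` under the action. -/
def EdgeOrbit (ρ : G →* Equiv.Perm V) (a b : V) : Set (Sym2 V) :=
  {e | ∃ g : G, e = s(ρ g a, ρ g b)}

/-- A one-edge splitting of `G` over `C`: a `G`-tree with a single orbit of edges,
no global fixed vertex, and an edge with stabilizer `C` (this is the Bass–Serre
tree of a nontrivial decomposition `A ∗_C B` or `A ∗_C`). -/
def OneEdgeSplitting (X : SimpleGraph V) (ρ : G →* Equiv.Perm V) (u v : V)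
    (C : Subgroup G) : Prop :=
  IsGTree X ρ ∧ X.Adj u v ∧ eStab ρ u v = C ∧
  (¬ ∃ w : V, ∀ g : G, ρ g w = w) ∧
  (∀ u' v' : V, X.Adj u' v' → ∃ g : G, (ρ g u = u' ∧ ρ g v = v') ∨ (ρ g u = v' ∧ ρ g v = u'))

/-- `G` splits over the subgroup `C`. -/
def SplitsOver (G : Type) [Group G] (C : Subgroup G) : Prop :=
  ∃ (W : Type) (T : SimpleGraph W) (σ : G →* Equiv.Perm W) (u v : W),
    OneEdgeSplitting T σ u v C

/-- Cayley graph of a group with respect to a set of generators. -/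
def cayley (G : Type) [Group G] (S : Set G) : SimpleGraph G :=
  SimpleGraph.fromRel (fun a b => a⁻¹ * b ∈ S)

end Defs

section FreeAux

/-- ℚ-abelianization of a free group. -/
noncomputable def abq (α : Type*) : FreeGroup α →* Multiplicative (α →₀ ℚ) :=
  FreeGroup.lift (fun i => Multiplicative.ofAdd (Finsupp.single i 1))

theorem abq_of {α : Type*} (i : α) :
    abq α (FreeGroup.of i) = Multiplicative.ofAdd (Finsupp.single i 1) :=
  FreeGroup.lift_apply_of

theorem abq_zpow {α : Type*} (i : α) (P : ℤ) :
    Multiplicative.toAdd (abq α (FreeGroup.of i ^ P)) = P • Finsupp.single i (1:ℚ) := by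
  rw [map_zpow, abq_of]
  simp

theorem of_zpow_eq_one {α : Type*} (i : α) (P : ℤ) (h : FreeGroup.of i ^ P = 1) : P = 0 := by
  have := congrArg (fun z => Multiplicative.toAdd (abq α z)) h
  simp only [abq_zpow, map_one] at this
  have h2 := congrArg (fun f => f i) this
  simp [Finsupp.single_eq_same] at h2
  exact_mod_cast h2

theorem of_zpow_ne {α : Type*} {i j : α} (hij : i ≠ j) (P Q : ℤ)
    (h : FreeGroup.of i ^ P = FreeGroup.of j ^ Q) : P = 0 := by
  have := congrArg (fun z => Multiplicative.toAdd (abq α z)) h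
  simp only [abq_zpow] at this
  have h2 := congrArg (fun f => f i) this
  simp [Finsupp.single_eq_same, Finsupp.single_eq_of_ne' (Ne.symm hij)] at h2
  exact_mod_cast h2

/-- Distinct generators of a free group do not commute. -/
theorem not_commute_of {α : Type*} {i j : α} (hij : i ≠ j) :
    ¬ Commute (FreeGroup.of i) (FreeGroup.of j) := by
  classical
  intro h
  let σ : Equiv.Perm (Fin 3) := Equiv.swap 0 1
  let τ : Equiv.Perm (Fin 3) := Equiv.swap 1 2
  let f : FreeGroup α →* Equiv.Perm (Fin 3) :=
    FreeGroup.lift (fun k => if k = i then σ else if k = j then τ else 1)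
  have hfi : f (FreeGroup.of i) = σ := by simp [f, FreeGroup.lift_apply_of]
  have hfj : f (FreeGroup.of j) = τ := by
    simp [f, FreeGroup.lift_apply_of, if_neg (Ne.symm hij)]
  have := h.map f
  rw [Commute, SemiconjBy, hfi, hfj] at this
  have : σ * τ = τ * σ := this
  revert this
  decide

end FreeAux

theorem freeGroup_eq_one_of_isEmpty {α : Type*} [IsEmpty α] (z : FreeGroup α) : z = 1 := by
  induction z using FreeGroup.induction_on with
  | C1 => rfl
  | of x => exact (IsEmpty.false x).elim
  | inv_of x h => rw [h]; simp
  | mul x y hx hy => rw [hx, hy, one_mul]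

theorem freeGroup_zpowers_of_subsingleton {α : Type*} [Subsingleton α] (i₀ : α)
    (z : FreeGroup α) : ∃ k : ℤ, z = FreeGroup.of i₀ ^ k := by
  induction z using FreeGroup.induction_on with
  | C1 => exact ⟨0, by simp⟩
  | of x => exact ⟨1, by rw [Subsingleton.elim x i₀, zpow_one]⟩
  | inv_of x h => obtain ⟨k, hk⟩ := h; exact ⟨-k, by rw [hk, ← zpow_neg]⟩
  | mul x y hx hy =>
    obtain ⟨k, hk⟩ := hx; obtain ⟨l, hl⟩ := hy
    exact ⟨k + l, by rw [hk, hl, zpow_add]⟩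

/-- A commutative subgroup of a free group lies in the cyclic subgroup generated by
one of its elements. -/
theorem comm_subgroup_cyclic {G : Type} [Group G] [IsFreeGroup G] (K : Subgroup G)
    (hcomm : ∀ a ∈ K, ∀ b ∈ K, a * b = b * a) :
    ∃ d ∈ K, ∀ z ∈ K, ∃ k : ℤ, z = d ^ k := by
  classical
  let e : K ≃* FreeGroup (IsFreeGroup.Generators K) := IsFreeGroup.toFreeGroup K
  haveI : Subsingleton (IsFreeGroup.Generators K) := by
    constructor
    intro i j
    by_contra hij
    apply not_commute_of hij
    have h1 : (e.symm (FreeGroup.of i) : G) * (e.symm (FreeGroup.of j) : G)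
        = (e.symm (FreeGroup.of j) : G) * (e.symm (FreeGroup.of i) : G) :=
      hcomm _ (e.symm (FreeGroup.of i)).2 _ (e.symm (FreeGroup.of j)).2
    have h2 : e.symm (FreeGroup.of i) * e.symm (FreeGroup.of j)
        = e.symm (FreeGroup.of j) * e.symm (FreeGroup.of i) := Subtype.ext h1
    have h3 := congrArg e h2
    exact (by simpa [map_mul] using h3 : FreeGroup.of i * FreeGroup.of j = FreeGroup.of j * FreeGroup.of i)
  rcases isEmpty_or_nonempty (IsFreeGroup.Generators K) with hemp | hne
  · refine ⟨1, one_mem K, fun z hz => ⟨0, ?_⟩⟩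
    have : e ⟨z, hz⟩ = 1 := freeGroup_eq_one_of_isEmpty _
    have h4 : (⟨z, hz⟩ : K) = 1 := by
      apply e.injective; rw [this, map_one]
    simpa using congrArg (Subtype.val) h4
  · obtain ⟨i₀⟩ := hne
    refine ⟨(e.symm (FreeGroup.of i₀) : G), (e.symm (FreeGroup.of i₀)).2, fun z hz => ?_⟩
    obtain ⟨k, hk⟩ := freeGroup_zpowers_of_subsingleton i₀ (e ⟨z, hz⟩)
    refine ⟨k, ?_⟩
    have h5 : (⟨z, hz⟩ : K) = e.symm (FreeGroup.of i₀) ^ k := by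
      apply e.injective
      rw [map_zpow, MulEquiv.apply_symm_apply, ← hk]
    have := congrArg (Subtype.val) h5
    simpa using this

/-- In a free group, elements with a common nontrivial power commute. -/
theorem commute_of_commElts {G : Type} [Group G] [IsFreeGroup G] {x y : G} {m n : ℤ}
    (hm : m ≠ 0) (hn : n ≠ 0) (h : x ^ m = y ^ n) : Commute x y := by
  classical
  set K : Subgroup G := Subgroup.closure {x, y} with hK
  have hxK : x ∈ K := Subgroup.subset_closure (by simp)
  have hyK : y ∈ K := Subgroup.subset_closure (by simp)
  let e : K ≃* FreeGroup (IsFreeGroup.Generators K) := IsFreeGroup.toFreeGroup K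
  set X := e ⟨x, hxK⟩ with hX
  set Y := e ⟨y, hyK⟩ with hY
  -- the relation upstairs
  have hrel : X ^ m = Y ^ n := by
    rw [hX, hY, ← map_zpow, ← map_zpow]
    congr 1
    exact Subtype.ext (by push_cast; exact h)
  -- generation upstairs
  have hgen : ∀ w : FreeGroup (IsFreeGroup.Generators K), w ∈ Subgroup.closure {X, Y} := by
    intro w
    have hw : (e.symm w : K) ∈ (⊤ : Subgroup K) := trivial
    rw [← Subgroup.closure_closure_coe_preimage (k := ({x, y} : Set G))] at hw
    have : ∀ (u : K) (_ : u ∈ Subgroup.closure (((↑) : K → G) ⁻¹' {x, y})),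
        e u ∈ Subgroup.closure {X, Y} := by
      intro u hu
      induction hu using Subgroup.closure_induction with
      | mem z hz =>
        rcases hz with hz | hz
        · have : z = (⟨x, hxK⟩ : K) := Subtype.ext hz
          rw [this]; exact Subgroup.subset_closure (by simp [hX])
        · have : z = (⟨y, hyK⟩ : K) := Subtype.ext hz
          rw [this]; exact Subgroup.subset_closure (by simp [hY])
      | one => rw [map_one]; exact one_mem _
      | mul a b ha hb iha ihb => rw [map_mul]; exact mul_mem iha ihb
      | inv a ha iha => rw [map_inv]; exact inv_mem iha
    have := this (e.symm w) hw
    rwa [MulEquiv.apply_symm_apply] at this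
  -- Subsingleton generators
  haveI : Subsingleton (IsFreeGroup.Generators K) := by
    constructor
    intro i j
    by_contra hij
    set v : (IsFreeGroup.Generators K) →₀ ℚ :=
      Multiplicative.toAdd (abq (IsFreeGroup.Generators K) X) with hv
    -- Y maps into the span of v
    have hYv : Multiplicative.toAdd (abq (IsFreeGroup.Generators K) Y) ∈ Submodule.span ℚ {v} := by
      have h1 : (m : ℚ) • v = (n : ℚ) • Multiplicative.toAdd (abq (IsFreeGroup.Generators K) Y) := by
        have h0 := congrArg (fun z => Multiplicative.toAdd (abq (IsFreeGroup.Generators K) z)) hrel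
        simp only [map_zpow, toAdd_zpow] at h0
        rw [Int.cast_smul_eq_zsmul, Int.cast_smul_eq_zsmul]
        exact h0
      have : Multiplicative.toAdd (abq (IsFreeGroup.Generators K) Y) = ((n : ℚ)⁻¹ * (m : ℚ)) • v := by
        rw [mul_smul, h1, inv_smul_smul₀ (by exact_mod_cast hn)]
      rw [this]
      exact Submodule.smul_mem _ _ (Submodule.mem_span_singleton_self v)
    have hall : ∀ w : FreeGroup (IsFreeGroup.Generators K),
        Multiplicative.toAdd (abq (IsFreeGroup.Generators K) w) ∈ Submodule.span ℚ {v} := by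
      intro w
      induction (hgen w) using Subgroup.closure_induction with
      | mem z hz =>
        rcases hz with hz | hz
        · rw [hz]; exact Submodule.mem_span_singleton_self v
        · rw [hz]; exact hYv
      | one => rw [map_one]; simpa using Submodule.zero_mem _
      | mul a b ha hb iha ihb => rw [map_mul]; exact Submodule.add_mem _ iha ihb
      | inv a ha iha => rw [map_inv]; simpa using Submodule.neg_mem _ iha
    -- now singles i and j are in span {v}
    have hi' : (Finsupp.single i (1:ℚ)) ∈ Submodule.span ℚ {v} := by
      have := hall (FreeGroup.of i); rwa [abq_of, toAdd_ofAdd] at this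
    have hj' : (Finsupp.single j (1:ℚ)) ∈ Submodule.span ℚ {v} := by
      have := hall (FreeGroup.of j); rwa [abq_of, toAdd_ofAdd] at this
    obtain ⟨q, hq⟩ := Submodule.mem_span_singleton.mp hi'
    obtain ⟨r, hr⟩ := Submodule.mem_span_singleton.mp hj'
    have h6 : r • (Finsupp.single i (1:ℚ)) = q • (Finsupp.single j (1:ℚ)) := by
      rw [← hq, ← hr, smul_comm]
    have h7 := congrArg (fun f => f i) h6
    simp [Finsupp.single_eq_same, Finsupp.single_eq_of_ne' (Ne.symm hij)] at h7
    rw [h7, zero_smul] at hr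
    have h8 := congrArg (fun f => f j) hr
    simp [Finsupp.single_eq_same] at h8
  -- conclude commute
  have hc : Commute X Y := by
    rcases isEmpty_or_nonempty (IsFreeGroup.Generators K) with hemp | ⟨⟨i₀⟩⟩
    · rw [freeGroup_eq_one_of_isEmpty X, freeGroup_eq_one_of_isEmpty Y]
    · obtain ⟨k, hk⟩ := freeGroup_zpowers_of_subsingleton i₀ X
      obtain ⟨l, hl⟩ := freeGroup_zpowers_of_subsingleton i₀ Y
      rw [hk, hl]
      exact (Commute.refl _).zpow_zpow k l
  have h9 : (⟨x, hxK⟩ : K) * ⟨y, hyK⟩ = ⟨y, hyK⟩ * ⟨x, hxK⟩ := by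
    apply e.injective
    rw [map_mul, map_mul, ← hX, ← hY]
    exact hc
  have h10 := congrArg Subtype.val h9
  push_cast at h10
  exact h10

theorem subsingleton_generators_of_comm {G : Type} [Group G] [IsFreeGroup G] (K : Subgroup G)
    (hcomm : ∀ a ∈ K, ∀ b ∈ K, a * b = b * a) :
    Subsingleton (IsFreeGroup.Generators K) := by
  constructor
  intro i j
  by_contra hij
  apply not_commute_of hij
  let e : K ≃* FreeGroup (IsFreeGroup.Generators K) := IsFreeGroup.toFreeGroup K
  have h1 : (e.symm (FreeGroup.of i) : G) * (e.symm (FreeGroup.of j) : G)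
      = (e.symm (FreeGroup.of j) : G) * (e.symm (FreeGroup.of i) : G) :=
    hcomm _ (e.symm (FreeGroup.of i)).2 _ (e.symm (FreeGroup.of j)).2
  have h2 : e.symm (FreeGroup.of i) * e.symm (FreeGroup.of j)
      = e.symm (FreeGroup.of j) * e.symm (FreeGroup.of i) := Subtype.ext h1
  have h3 := congrArg e h2
  exact (by simpa [map_mul] using h3 : FreeGroup.of i * FreeGroup.of j = FreeGroup.of j * FreeGroup.of i)

/-- Free groups are torsion-free. -/
theorem freeGroup_tf {G : Type} [Group G] [IsFreeGroup G] {z : G} (hz : z ≠ 1) {k : ℤ}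
    (h : z ^ k = 1) : k = 0 := by
  set K : Subgroup G := Subgroup.zpowers z with hK
  have hcomm : ∀ a ∈ K, ∀ b ∈ K, a * b = b * a := by
    intro a ha b hb
    obtain ⟨p, hp⟩ := ha
    obtain ⟨q, hq⟩ := hb
    rw [← hp, ← hq]
    exact ((Commute.refl z).zpow_zpow p q)
  haveI := subsingleton_generators_of_comm K hcomm
  let e : K ≃* FreeGroup (IsFreeGroup.Generators K) := IsFreeGroup.toFreeGroup K
  have hzK : z ∈ K := Subgroup.mem_zpowers z
  have hw1 : e ⟨z, hzK⟩ ≠ 1 := by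
    intro hw
    apply hz
    have : (⟨z, hzK⟩ : K) = 1 := e.injective (by rw [hw, map_one])
    simpa using congrArg Subtype.val this
  rcases isEmpty_or_nonempty (IsFreeGroup.Generators K) with hemp | ⟨⟨i₀⟩⟩
  · exact absurd (freeGroup_eq_one_of_isEmpty _) hw1
  · obtain ⟨t, ht⟩ := freeGroup_zpowers_of_subsingleton i₀ (e ⟨z, hzK⟩)
    have ht0 : t ≠ 0 := by
      intro h0; apply hw1; rw [ht, h0, zpow_zero]
    have hzk : (⟨z, hzK⟩ : K) ^ k = 1 := Subtype.ext (by push_cast; exact h)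
    have : FreeGroup.of i₀ ^ (t * k) = 1 := by
      rw [zpow_mul, ← ht, ← map_zpow, hzk, map_one]
    have := of_zpow_eq_one _ _ this
    rcases mul_eq_zero.mp this with h' | h'
    · exact absurd h' ht0
    · exact h'

/-- Commuting nontrivial elements of a free group have common powers. -/
theorem commElts_of_commute {G : Type} [Group G] [IsFreeGroup G] {x y : G}
    (h : Commute x y) (hx : x ≠ 1) (hy : y ≠ 1) :
    ∃ p q : ℤ, p ≠ 0 ∧ q ≠ 0 ∧ x ^ p = y ^ q := by
  set K : Subgroup G := Subgroup.closure {x, y} with hK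
  have hxK : x ∈ K := Subgroup.subset_closure (by simp)
  have hyK : y ∈ K := Subgroup.subset_closure (by simp)
  have hcomm : ∀ a ∈ K, ∀ b ∈ K, a * b = b * a := by
    intro a ha b hb
    refine Subgroup.closure_induction₂ (k := ({x, y} : Set G))
      (p := fun a b _ _ => a * b = b * a) ?_ ?_ ?_ ?_ ?_ ?_ ?_ ha hb
    · rintro u w (rfl | rfl) (rfl | rfl)
      · rfl
      · exact h
      · exact h.symm
      · rfl
    · intro u _; rw [one_mul, mul_one]
    · intro u _; rw [one_mul, mul_one]
    · intro u w c _ _ _ h1 h2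
      exact (Commute.mul_left h1 h2 : _)
    · intro u w c _ _ _ h1 h2
      exact (Commute.mul_right h1 h2 : _)
    · intro u w _ _ h1; exact (Commute.inv_left h1 : _)
    · intro u w _ _ h1; exact (Commute.inv_right h1 : _)
  obtain ⟨d, hdK, hd⟩ := comm_subgroup_cyclic K hcomm
  obtain ⟨a, hax⟩ := hd x hxK
  obtain ⟨b, hby⟩ := hd y hyK
  have ha0 : a ≠ 0 := fun h0 => hx (by rw [hax, h0, zpow_zero])
  have hb0 : b ≠ 0 := fun h0 => hy (by rw [hby, h0, zpow_zero])
  refine ⟨b, a, hb0, ha0, ?_⟩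
  rw [hax, hby, ← zpow_mul, ← zpow_mul, mul_comm]


section TreeAux

variable {G V : Type} [Group G]

theorem exists_ne_one_of_infinite {H : Subgroup G} (hH : Infinite H) :
    ∃ g ∈ H, g ≠ 1 := by
  haveI := hH
  obtain ⟨⟨g, hg⟩, hne⟩ := exists_ne (1 : H)
  exact ⟨g, hg, fun h => hne (Subtype.ext h)⟩

theorem commElts_trans {a b c : G} (h1 : CommElts a b) (h2 : CommElts b c) : CommElts a c := by
  obtain ⟨m, n, hm, hn, hab⟩ := h1
  obtain ⟨p, q, hp, hq, hbc⟩ := h2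
  refine ⟨m * p, q * n, mul_ne_zero hm hp, mul_ne_zero hq hn, ?_⟩
  rw [zpow_mul, hab, ← zpow_mul, mul_comm n p, zpow_mul, hbc, ← zpow_mul, mul_comm q n]

theorem commElts_of_cyclic {H : Subgroup G} (hH : IsCyclic H) {a b : G}
    (ha : a ∈ H) (hb : b ∈ H) (ha1 : a ≠ 1) (hb1 : b ≠ 1) : CommElts a b := by
  obtain ⟨g, hg⟩ := hH.exists_generator
  obtain ⟨i, hi⟩ := Subgroup.mem_zpowers_iff.mp (hg ⟨a, ha⟩)
  obtain ⟨j, hj⟩ := Subgroup.mem_zpowers_iff.mp (hg ⟨b, hb⟩)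
  have hi0 : i ≠ 0 := by
    intro h0; apply ha1
    rw [h0, zpow_zero] at hi
    simpa using congrArg Subtype.val hi.symm
  have hj0 : j ≠ 0 := by
    intro h0; apply hb1
    rw [h0, zpow_zero] at hj
    simpa using congrArg Subtype.val hj.symm
  refine ⟨j, i, hj0, hi0, ?_⟩
  have : ((g ^ i : H) : G) ^ j = ((g ^ j : H) : G) ^ i := by
    push_cast
    rw [← zpow_mul, ← zpow_mul, mul_comm]
  rw [hi, hj] at this
  exact this

theorem mem_vStab_iff {ρ : G →* Equiv.Perm V} {γ : G} {v : V} :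
    γ ∈ vStab ρ v ↔ ρ γ v = v := by
  rw [vStab, Subgroup.mem_comap, MulAction.mem_stabilizer_iff]
  rfl

/-- Nontrivial elements of vertex stabilizers of a GBS tree are pairwise commensurable. -/
theorem commElts_of_walk {X : SimpleGraph V} {ρ : G →* Equiv.Perm V}
    (hGBS : IsGBSTree X ρ) :
    ∀ {u w : V} (_ : X.Walk u w) {a b : G}, a ∈ vStab ρ u → b ∈ vStab ρ w →
      a ≠ 1 → b ≠ 1 → CommElts a b := by
  intro u w p
  induction p with
  | nil =>
    intro a b ha hb ha1 hb1
    exact commElts_of_cyclic (hGBS.2.1 _).1 ha hb ha1 hb1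
  | @cons u x w hadj p ih =>
    intro a b ha hb ha1 hb1
    obtain ⟨c, hc, hc1⟩ := exists_ne_one_of_infinite (hGBS.2.2 u x hadj).2
    have hcu : c ∈ vStab ρ u := hc.1
    have hcx : c ∈ vStab ρ x := hc.2
    have h1 : CommElts a c := commElts_of_cyclic (hGBS.2.1 u).1 ha hcu ha1 hc1
    have h2 : CommElts c b := ih hcx hb hc1 hb1
    exact commElts_trans h1 h2

/-- Any two nontrivial elliptic elements are commensurable. -/
theorem commElts_of_elliptic {X : SimpleGraph V} {ρ : G →* Equiv.Perm V}
    (hGBS : IsGBSTree X ρ) {a b : G} (ha : Elliptic ρ a) (hb : Elliptic ρ b)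
    (ha1 : a ≠ 1) (hb1 : b ≠ 1) : CommElts a b := by
  obtain ⟨u, hu⟩ := ha
  obtain ⟨w, hw⟩ := hb
  obtain ⟨p⟩ := hGBS.1.1.isConnected.preconnected u w
  exact commElts_of_walk hGBS p (mem_vStab_iff.mpr hu) (mem_vStab_iff.mpr hw) ha1 hb1

theorem elliptic_conj {ρ : G →* Equiv.Perm V} {γ : G} (h : Elliptic ρ γ) (g : G) :
    Elliptic ρ (g * γ * g⁻¹) := by
  obtain ⟨v, hv⟩ := h
  refine ⟨ρ g v, ?_⟩
  have : ρ (g * γ * g⁻¹) = ρ g * ρ γ * (ρ g)⁻¹ := by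
    rw [map_mul, map_mul, map_inv]
  rw [this]
  simp [hv]

end TreeAux

/-- A generalized Baumslag–Solitar group not isomorphic to `ℤ`
is not a free group. -/
theorem gbs_not_free {G : Type} [Group G] (hG : IsGBSGroup G)
    (hZ : ¬ Nonempty (G ≃* Multiplicative ℤ)) :
    ¬ IsFreeGrp G := by
  rintro ⟨ι, ⟨φ⟩⟩
  haveI : IsFreeGroup G := IsFreeGroup.ofMulEquiv φ.symm
  obtain ⟨V, X, ρ, hGBS⟩ := hG
  obtain ⟨v₀⟩ : Nonempty V := hGBS.1.1.isConnected.nonempty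
  obtain ⟨a, haMem, ha1⟩ := exists_ne_one_of_infinite (hGBS.2.1 v₀).2
  have haEll : Elliptic ρ a := ⟨v₀, mem_vStab_iff.mp haMem⟩
  set E : Set G := {z | z ≠ 1 ∧ Elliptic ρ z} with hE
  set N : Subgroup G := Subgroup.closure E with hN
  have haN : a ∈ N := Subgroup.subset_closure ⟨ha1, haEll⟩
  -- N is commutative
  have hNcomm : ∀ u ∈ N, ∀ w ∈ N, u * w = w * u := by
    intro u hu w hw
    refine Subgroup.closure_induction₂ (p := fun u w _ _ => u * w = w * u)
      ?_ ?_ ?_ ?_ ?_ ?_ ?_ hu hw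
    · intro z w' hz hw'
      obtain ⟨m, n, hm, hn, hzw⟩ := commElts_of_elliptic hGBS hz.2 hw'.2 hz.1 hw'.1
      exact (commute_of_commElts hm hn hzw).eq
    · intro z _; rw [one_mul, mul_one]
    · intro z _; rw [one_mul, mul_one]
    · intro z w' c _ _ _ h1 h2; exact (Commute.mul_left h1 h2 : _)
    · intro z w' c _ _ _ h1 h2; exact (Commute.mul_right h1 h2 : _)
    · intro z w' _ _ h1; exact (Commute.inv_left h1 : _)
    · intro z w' _ _ h1; exact (Commute.inv_right h1 : _)
  -- N is normal
  have hNnormal : ∀ g : G, ∀ n ∈ N, g * n * g⁻¹ ∈ N := by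
    intro g n hn
    induction hn using Subgroup.closure_induction with
    | mem z hz =>
      refine Subgroup.subset_closure ⟨?_, elliptic_conj hz.2 g⟩
      intro h
      exact hz.1 (by simpa [mul_assoc] using congrArg (fun t => g⁻¹ * t * g) h)
    | one => simpa using one_mem N
    | mul u w hu hw ihu ihw =>
      have : g * (u * w) * g⁻¹ = (g * u * g⁻¹) * (g * w * g⁻¹) := by group
      rw [this]; exact mul_mem ihu ihw
    | inv u hu ihu =>
      have : g * u⁻¹ * g⁻¹ = (g * u * g⁻¹)⁻¹ := by group
      rw [this]; exact inv_mem ihu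
  obtain ⟨d, hdN, hd⟩ := comm_subgroup_cyclic N hNcomm
  obtain ⟨s, hs⟩ := hd a haN
  have hd1 : d ≠ 1 := fun h => ha1 (by rw [hs, h, one_zpow])
  -- squares commute with d
  have hsq : ∀ g : G, Commute (g * g) d := by
    intro g
    obtain ⟨k, hk⟩ := hd _ (hNnormal g d hdN)
    obtain ⟨l, hl⟩ := hd _ (hNnormal g⁻¹ d hdN)
    rw [inv_inv] at hl
    have hdkl : d ^ (k * l) = d := by
      rw [zpow_mul, ← hk, conj_zpow, ← hl]
      group
    have hkl1 : k * l = 1 := by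
      have h0 : d ^ (k * l - 1) = 1 := by
        rw [zpow_sub, hdkl, zpow_one, mul_inv_cancel]
      have := freeGroup_tf hd1 h0
      omega
    have hk1 : k = 1 ∨ k = -1 := Int.isUnit_iff.mp (IsUnit.of_mul_eq_one l hkl1)
    have hconj : (g * g) * d * (g * g)⁻¹ = d := by
      calc (g * g) * d * (g * g)⁻¹ = g * (g * d * g⁻¹) * g⁻¹ := by group
        _ = g * d ^ k * g⁻¹ := by rw [hk]
        _ = (g * d * g⁻¹) ^ k := conj_zpow.symm
        _ = (d ^ k) ^ k := by rw [hk]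
        _ = d ^ (k * k) := by rw [← zpow_mul]
        _ = d := by rcases hk1 with h | h <;> rw [h] <;> norm_num
    calc (g * g) * d = ((g * g) * d * (g * g)⁻¹) * (g * g) := by group
      _ = d * (g * g) := by rw [hconj]
  -- case analysis on the generators of G
  set κ := IsFreeGroup.Generators G with hκ
  let eG : G ≃* FreeGroup κ := IsFreeGroup.toFreeGroup G
  by_cases hsub : ∀ i j : κ, i = j
  · haveI : Subsingleton κ := ⟨hsub⟩
    rcases isEmpty_or_nonempty κ with hemp | ⟨⟨i₀⟩⟩
    · apply ha1
      have : eG a = 1 := freeGroup_eq_one_of_isEmpty _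
      have := congrArg eG.symm this
      simpa using this
    · apply hZ
      let toHom : G →* Multiplicative ℤ :=
        (FreeGroup.lift (fun _ : κ => Multiplicative.ofAdd (1 : ℤ))).comp eG.toMonoidHom
      let invHom : Multiplicative ℤ →* G := zpowersHom G (eG.symm (FreeGroup.of i₀))
      have h1 : toHom.comp invHom = MonoidHom.id (Multiplicative ℤ) := by
        apply MonoidHom.ext_mint
        show toHom (invHom (Multiplicative.ofAdd 1)) = Multiplicative.ofAdd 1
        have hinv : invHom (Multiplicative.ofAdd 1) = eG.symm (FreeGroup.of i₀) := by
          show (eG.symm (FreeGroup.of i₀)) ^ (Multiplicative.toAdd (Multiplicative.ofAdd (1:ℤ))) = _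
          simp
        rw [hinv]
        show FreeGroup.lift _ (eG (eG.symm (FreeGroup.of i₀))) = _
        rw [MulEquiv.apply_symm_apply, FreeGroup.lift_apply_of]
      have h2 : invHom.comp toHom = MonoidHom.id G := by
        have key : (invHom.comp toHom).comp (eG.symm : FreeGroup κ →* G)
            = (MonoidHom.id G).comp (eG.symm : FreeGroup κ →* G) := by
          apply FreeGroup.ext_hom
          intro b
          rw [Subsingleton.elim b i₀]
          show invHom (toHom (eG.symm (FreeGroup.of i₀))) = eG.symm (FreeGroup.of i₀)
          have : toHom (eG.symm (FreeGroup.of i₀)) = Multiplicative.ofAdd 1 := by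
            show FreeGroup.lift _ (eG (eG.symm (FreeGroup.of i₀))) = _
            rw [MulEquiv.apply_symm_apply, FreeGroup.lift_apply_of]
          rw [this]
          show (eG.symm (FreeGroup.of i₀)) ^ (Multiplicative.toAdd (Multiplicative.ofAdd (1:ℤ))) = _
          simp
        ext g
        have := congrArg (fun F => F (eG g)) key
        simpa using this
      exact ⟨MonoidHom.toMulEquiv toHom invHom h2 h1⟩
  · push_neg at hsub
    obtain ⟨i, j, hij⟩ := hsub
    set x : G := eG.symm (FreeGroup.of i) with hx
    set y : G := eG.symm (FreeGroup.of j) with hy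
    have hxE : eG x = FreeGroup.of i := by rw [hx, MulEquiv.apply_symm_apply]
    have hyE : eG y = FreeGroup.of j := by rw [hy, MulEquiv.apply_symm_apply]
    have hsq2 : ∀ (w : FreeGroup κ) (t : ℤ), (w * w) ^ t = w ^ ((2:ℤ) * t) := by
      intro w t
      rw [← zpow_two, ← zpow_mul]
    have hxx1 : x * x ≠ 1 := by
      intro h
      have h1 : FreeGroup.of i ^ (2:ℤ) = 1 := by
        rw [zpow_two, ← hxE, ← map_mul, h, map_one]
      have h2 := of_zpow_eq_one _ _ h1
      norm_num at h2
    have hyy1 : y * y ≠ 1 := by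
      intro h
      have h1 : FreeGroup.of j ^ (2:ℤ) = 1 := by
        rw [zpow_two, ← hyE, ← map_mul, h, map_one]
      have h2 := of_zpow_eq_one _ _ h1
      norm_num at h2
    obtain ⟨p, q, hp, hq, hxd⟩ := commElts_of_commute (hsq x) hxx1 hd1
    obtain ⟨p', q', hp', hq', hyd⟩ := commElts_of_commute (hsq y) hyy1 hd1
    have hkey : (x * x) ^ (p * q') = (y * y) ^ (p' * q) := by
      rw [zpow_mul, zpow_mul, hxd, hyd, ← zpow_mul, ← zpow_mul, mul_comm]
    have hkey2 : FreeGroup.of i ^ ((2:ℤ) * (p * q')) = FreeGroup.of j ^ ((2:ℤ) * (p' * q)) := by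
      rw [← hsq2, ← hsq2]
      have := congrArg eG hkey
      rwa [map_zpow, map_zpow, map_mul, map_mul, hxE, hyE] at this
    have h3 := of_zpow_ne hij _ _ hkey2
    have h4 : p * q' ≠ 0 := mul_ne_zero hp hq'
    omega
end

section
/- Fix nonzero integers m, n, r, s. Let G₁ be the fundamental group of the graph of groups with two vertices u, v with groups ℤ, an edge from u to v with edge group ℤ included by multiplication by rm² into G_u and by s into G_v, and a loop at u with edge group ℤ included by multiplication by mnr and by r into G_u. Let G₂ be defined symmetrically: two vertices with groups ℤ, an edge with inclusions r into G_u and sn² into G_v, and a loop at v with inclusions s and mns into G_v. Then G₁ ≅ G₂. -/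
namespace GbsExampleAux

variable {G : Type*} [Group G]

lemma zpc (x : G) {i j : ℤ} (h : i = j) : x ^ i = x ^ j := by rw [h]

lemma conj2_zpow (T A : G) (k : ℤ) :
    (T*(T*A*T⁻¹)*T⁻¹)^k = T*(T*A^k*T⁻¹)*T⁻¹ := by
  rw [conj_zpow, conj_zpow]

lemma conj2_zpow' (T A : G) (k : ℤ) :
    (T⁻¹*(T⁻¹*A*T)*T)^k = T⁻¹*(T⁻¹*A^k*T)*T := by
  have e1 : (T⁻¹*(T⁻¹*A*T)*T)^k = T⁻¹*((T⁻¹*A*T)^k)*T := by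
    simpa using conj_zpow (i := k) (a := T⁻¹) (b := T⁻¹*A*T)
  have e2 : (T⁻¹*A*T)^k = T⁻¹*A^k*T := by
    simpa using conj_zpow (i := k) (a := T⁻¹) (b := A)
  rw [e1, e2]

section Phi
-- relations of G₂ hold; check relators of G₁ under a ↦ T(TAT⁻¹)T⁻¹, b ↦ B, t ↦ T
variable (A B T : G) (m n r s : ℤ)
  (h1 : T * B^(m*n*s) * T⁻¹ = B^s) (h2 : A^r = B^(s*n^2))

include h1 in
lemma hkB : ∀ k : ℤ, T * B^(m*n*s*k) * T⁻¹ = B^(s*k) := by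
  intro k
  calc T * B^(m*n*s*k) * T⁻¹ = T * (B^(m*n*s))^k * T⁻¹ := by rw [← zpow_mul]
    _ = (T * B^(m*n*s) * T⁻¹)^k := conj_zpow.symm
    _ = (B^s)^k := by rw [h1]
    _ = B^(s*k) := by rw [← zpow_mul]

include h1 h2 in
lemma phi_rel1 :
    T * (T*(T*A*T⁻¹)*T⁻¹)^(m*n*r) * T⁻¹ * ((T*(T*A*T⁻¹)*T⁻¹)^r)⁻¹ = 1 := by
  have e0 : A^(m*n*r) = B^(m*n*s*n^2) := by
    rw [zpc A (show m*n*r = r*(m*n) by ring), zpow_mul, h2, ← zpow_mul,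
      zpc B (show s*n^2*(m*n) = m*n*s*n^2 by ring)]
  have e1 : T * A^(m*n*r) * T⁻¹ = A^r := by
    rw [e0, hkB B T m n s h1 (n^2), ← h2]
  have e1' : A^(m*n*r) = T⁻¹ * A^r * T := by rw [← e1]; group
  rw [conj2_zpow, conj2_zpow, e1']
  group

include h1 h2 in
lemma phi_rel2 :
    (T*(T*A*T⁻¹)*T⁻¹)^(r*m^2) * (B^s)⁻¹ = 1 := by
  rw [conj2_zpow]
  have e2 : A^(r*m^2) = B^(m*n*s*(m*n)) := by
    rw [zpc A (show r*m^2 = r*(m^2) by ring), zpow_mul, h2, ← zpow_mul,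
      zpc B (show s*n^2*m^2 = m*n*s*(m*n) by ring)]
  rw [e2, hkB B T m n s h1 (m*n), zpc B (show s*(m*n) = m*n*s*1 by ring),
    hkB B T m n s h1 1, zpc B (show s*1 = s by ring)]
  group

end Phi

section Psi
-- relations of G₁ hold; check relators of G₂ under a ↦ T⁻¹(T⁻¹AT)T, b ↦ B, t ↦ T
variable (A B T : G) (m n r s : ℤ)
  (h1 : T * A^(m*n*r) * T⁻¹ = A^r) (h2 : A^(r*m^2) = B^s)

include h1 in
lemma hkA : ∀ k : ℤ, T * A^(m*n*r*k) * T⁻¹ = A^(r*k) := by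
  intro k
  calc T * A^(m*n*r*k) * T⁻¹ = T * (A^(m*n*r))^k * T⁻¹ := by rw [← zpow_mul]
    _ = (T * A^(m*n*r) * T⁻¹)^k := conj_zpow.symm
    _ = (A^r)^k := by rw [h1]
    _ = A^(r*k) := by rw [← zpow_mul]

include h1 in
lemma hkA' : ∀ k : ℤ, T⁻¹ * A^(r*k) * T = A^(m*n*r*k) := by
  intro k
  rw [← hkA A T m n r h1 k]
  group

include h1 h2 in
lemma psi_rel1 :
    T * B^(m*n*s) * T⁻¹ * (B^s)⁻¹ = 1 := by
  have e0 : B^(m*n*s) = A^(m*n*r*m^2) := by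
    rw [zpc B (show m*n*s = s*(m*n) by ring), zpow_mul, ← h2, ← zpow_mul,
      zpc A (show r*m^2*(m*n) = m*n*r*m^2 by ring)]
  rw [e0, hkA A T m n r h1 (m^2), h2]
  group

include h1 h2 in
lemma psi_rel2 :
    (T⁻¹*(T⁻¹*A*T)*T)^r * (B^(s*n^2))⁻¹ = 1 := by
  rw [conj2_zpow', mul_inv_eq_one]
  calc T⁻¹*(T⁻¹*A^r*T)*T
      = T⁻¹*(T⁻¹*A^(r*1)*T)*T := by rw [zpc A (show r = r*1 by ring)]
    _ = T⁻¹*A^(m*n*r*1)*T := by rw [hkA' A T m n r h1 1]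
    _ = T⁻¹*A^(r*(m*n))*T := by rw [zpc A (show m*n*r*1 = r*(m*n) by ring)]
    _ = A^(m*n*r*(m*n)) := hkA' A T m n r h1 (m*n)
    _ = B^(s*n^2) := by
        rw [zpc A (show m*n*r*(m*n) = r*m^2*n^2 by ring), zpow_mul, h2, ← zpow_mul]

end Psi

lemma rel_mk {α : Type*} {rels : Set (FreeGroup α)} {x : FreeGroup α} (h : x ∈ rels) :
    PresentedGroup.mk rels x = 1 :=
  (QuotientGroup.eq_one_iff _).mpr (Subgroup.subset_normalClosure h)

lemma mk_of {α : Type*} {rels : Set (FreeGroup α)} (x : α) :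
    PresentedGroup.mk rels (FreeGroup.of x) = PresentedGroup.of x := rfl

end GbsExampleAux

open GbsExampleAux in
/-- For nonzero integers `m, n, r, s`, the groups
`G₁ = ⟨a, b, t | t a^{mnr} t⁻¹ = a^r, a^{rm²} = b^s⟩` and
`G₂ = ⟨a, b, t | t b^{mns} t⁻¹ = b^s, a^r = b^{sn²}⟩`
(the fundamental groups of the two edge-indexed graphs of `ℤ`'s in the main
example) are isomorphic.  Here `a = of 0`, `b = of 1`, `t = of 2`. -/
theorem gbs_example_iso (m n r s : ℤ) (hm : m ≠ 0) (hn : n ≠ 0) (hr : r ≠ 0) (hs : s ≠ 0) :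
    Nonempty
      ((PresentedGroup
          ({FreeGroup.of 2 * FreeGroup.of 0 ^ (m * n * r) * (FreeGroup.of 2)⁻¹ *
              (FreeGroup.of 0 ^ r)⁻¹,
            FreeGroup.of 0 ^ (r * m ^ 2) * (FreeGroup.of 1 ^ s)⁻¹} :
            Set (FreeGroup (Fin 3)))) ≃*
        (PresentedGroup
          ({FreeGroup.of 2 * FreeGroup.of 1 ^ (m * n * s) * (FreeGroup.of 2)⁻¹ *
              (FreeGroup.of 1 ^ s)⁻¹,
            FreeGroup.of 0 ^ r * (FreeGroup.of 1 ^ (s * n ^ 2))⁻¹} :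
            Set (FreeGroup (Fin 3))))) := by
  set rels₁ : Set (FreeGroup (Fin 3)) :=
    {FreeGroup.of 2 * FreeGroup.of 0 ^ (m * n * r) * (FreeGroup.of 2)⁻¹ *
        (FreeGroup.of 0 ^ r)⁻¹,
      FreeGroup.of 0 ^ (r * m ^ 2) * (FreeGroup.of 1 ^ s)⁻¹} with hrels₁
  set rels₂ : Set (FreeGroup (Fin 3)) :=
    {FreeGroup.of 2 * FreeGroup.of 1 ^ (m * n * s) * (FreeGroup.of 2)⁻¹ *
        (FreeGroup.of 1 ^ s)⁻¹,
      FreeGroup.of 0 ^ r * (FreeGroup.of 1 ^ (s * n ^ 2))⁻¹} with hrels₂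
  -- generators
  set A₁ : PresentedGroup rels₁ := PresentedGroup.of 0 with hA₁
  set B₁ : PresentedGroup rels₁ := PresentedGroup.of 1 with hB₁
  set T₁ : PresentedGroup rels₁ := PresentedGroup.of 2 with hT₁
  set A₂ : PresentedGroup rels₂ := PresentedGroup.of 0 with hA₂
  set B₂ : PresentedGroup rels₂ := PresentedGroup.of 1 with hB₂
  set T₂ : PresentedGroup rels₂ := PresentedGroup.of 2 with hT₂
  -- relations in G₁
  have g1rel1 : T₁ * A₁^(m*n*r) * T₁⁻¹ = A₁^r := by
    have h := rel_mk (rels := rels₁)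
      (x := FreeGroup.of 2 * FreeGroup.of 0 ^ (m * n * r) * (FreeGroup.of 2)⁻¹ *
        (FreeGroup.of 0 ^ r)⁻¹) (by rw [hrels₁]; exact Set.mem_insert _ _)
    simp only [map_mul, map_zpow, map_inv, mk_of] at h
    rw [← hA₁, ← hT₁] at h
    rwa [mul_inv_eq_one] at h
  have g1rel2 : A₁^(r*m^2) = B₁^s := by
    have h := rel_mk (rels := rels₁)
      (x := FreeGroup.of 0 ^ (r * m ^ 2) * (FreeGroup.of 1 ^ s)⁻¹)
      (by rw [hrels₁]; exact Set.mem_insert_of_mem _ rfl)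
    simp only [map_mul, map_zpow, map_inv, mk_of] at h
    rw [← hA₁, ← hB₁] at h
    rwa [mul_inv_eq_one] at h
  -- relations in G₂
  have g2rel1 : T₂ * B₂^(m*n*s) * T₂⁻¹ = B₂^s := by
    have h := rel_mk (rels := rels₂)
      (x := FreeGroup.of 2 * FreeGroup.of 1 ^ (m * n * s) * (FreeGroup.of 2)⁻¹ *
        (FreeGroup.of 1 ^ s)⁻¹) (by rw [hrels₂]; exact Set.mem_insert _ _)
    simp only [map_mul, map_zpow, map_inv, mk_of] at h
    rw [← hB₂, ← hT₂] at h
    rwa [mul_inv_eq_one] at h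
  have g2rel2 : A₂^r = B₂^(s*n^2) := by
    have h := rel_mk (rels := rels₂)
      (x := FreeGroup.of 0 ^ r * (FreeGroup.of 1 ^ (s * n ^ 2))⁻¹)
      (by rw [hrels₂]; exact Set.mem_insert_of_mem _ rfl)
    simp only [map_mul, map_zpow, map_inv, mk_of] at h
    rw [← hA₂, ← hB₂] at h
    rwa [mul_inv_eq_one] at h
  -- the forward homomorphism
  have hφ : ∀ w ∈ rels₁,
      FreeGroup.lift (![T₂*(T₂*A₂*T₂⁻¹)*T₂⁻¹, B₂, T₂] : Fin 3 → PresentedGroup rels₂) w = 1 := by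
    intro w hw
    rw [hrels₁] at hw
    simp only [Set.mem_insert_iff, Set.mem_singleton_iff] at hw
    rcases hw with rfl | rfl
    · simp only [map_mul, map_zpow, map_inv, FreeGroup.lift_apply_of, Matrix.cons_val_zero,
        Matrix.cons_val_one, Matrix.head_cons, Matrix.cons_val_two, Matrix.tail_cons]
      exact phi_rel1 A₂ B₂ T₂ m n r s g2rel1 g2rel2
    · simp only [map_mul, map_zpow, map_inv, FreeGroup.lift_apply_of, Matrix.cons_val_zero,
        Matrix.cons_val_one, Matrix.head_cons, Matrix.cons_val_two, Matrix.tail_cons]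
      exact phi_rel2 A₂ B₂ T₂ m n r s g2rel1 g2rel2
  have hψ : ∀ w ∈ rels₂,
      FreeGroup.lift (![T₁⁻¹*(T₁⁻¹*A₁*T₁)*T₁, B₁, T₁] : Fin 3 → PresentedGroup rels₁) w = 1 := by
    intro w hw
    rw [hrels₂] at hw
    simp only [Set.mem_insert_iff, Set.mem_singleton_iff] at hw
    rcases hw with rfl | rfl
    · simp only [map_mul, map_zpow, map_inv, FreeGroup.lift_apply_of, Matrix.cons_val_zero,
        Matrix.cons_val_one, Matrix.head_cons, Matrix.cons_val_two, Matrix.tail_cons]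
      exact psi_rel1 A₁ B₁ T₁ m n r s g1rel1 g1rel2
    · simp only [map_mul, map_zpow, map_inv, FreeGroup.lift_apply_of, Matrix.cons_val_zero,
        Matrix.cons_val_one, Matrix.head_cons, Matrix.cons_val_two, Matrix.tail_cons]
      exact psi_rel2 A₁ B₁ T₁ m n r s g1rel1 g1rel2
  have ψT : PresentedGroup.toGroup hψ T₂ = T₁ := by
    rw [hT₂, PresentedGroup.toGroup.of]
    simp only [Matrix.cons_val_two, Matrix.tail_cons, Matrix.head_cons]
  have ψA : PresentedGroup.toGroup hψ A₂ = T₁⁻¹*(T₁⁻¹*A₁*T₁)*T₁ := by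
    rw [hA₂, PresentedGroup.toGroup.of]
    simp only [Matrix.cons_val_zero]
  have φT : PresentedGroup.toGroup hφ T₁ = T₂ := by
    rw [hT₁, PresentedGroup.toGroup.of]
    simp only [Matrix.cons_val_two, Matrix.tail_cons, Matrix.head_cons]
  have φA : PresentedGroup.toGroup hφ A₁ = T₂*(T₂*A₂*T₂⁻¹)*T₂⁻¹ := by
    rw [hA₁, PresentedGroup.toGroup.of]
    simp only [Matrix.cons_val_zero]
  refine ⟨MonoidHom.toMulEquiv (PresentedGroup.toGroup hφ) (PresentedGroup.toGroup hψ) ?_ ?_⟩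
  · apply PresentedGroup.ext
    intro x
    fin_cases x <;>
      simp only [MonoidHom.comp_apply, MonoidHom.id_apply, PresentedGroup.toGroup.of,
        map_mul, map_inv, Matrix.cons_val_zero, Matrix.cons_val_one, Matrix.head_cons,
        Matrix.cons_val_two, Matrix.tail_cons, Fin.mk_zero, Fin.mk_one]
    · rw [ψT, ψA]; group; rfl
    · rfl
    · rfl
  · apply PresentedGroup.ext
    intro x
    fin_cases x <;>
      simp only [MonoidHom.comp_apply, MonoidHom.id_apply, PresentedGroup.toGroup.of,
        map_mul, map_inv, Matrix.cons_val_zero, Matrix.cons_val_one, Matrix.head_cons,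
        Matrix.cons_val_two, Matrix.tail_cons, Fin.mk_zero, Fin.mk_one]
    · rw [φT, φA]; group; rfl
    · rfl
    · rfl
end

section
/- Let X be a cocompact G-tree whose vertex and edge stabilizers are all infinite cyclic, and let e be an edge of X with endpoint w = ∂₁e. Suppose the one-edge splitting X̂ of G obtained by collapsing the components of X − Ge admits a nontrivial fold f: Y → X̂ at the image of the endpoint ∂₀e, with the stabilizer of the corresponding edge e' of Y a proper nontrivial subgroup of G_e. Then G_e = G_w, i.e. the edge stabilizer of e equals the stabilizer of its endpoint w. -/
open SimpleGraph

/-- `T` has a single orbit of edges under the action `σ`. -/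
def OneEdgeOrbit {G W : Type} [Group G] (T : SimpleGraph W) (σ : G →* Equiv.Perm W) : Prop :=
  ∃ u v : W, T.Adj u v ∧ ∀ x y : W, T.Adj x y →
    ∃ g : G, (σ g u = x ∧ σ g v = y) ∨ (σ g u = y ∧ σ g v = x)

/-- `q : V → W` is the equivariant quotient map collapsing each connected component
of `X − G⬝{a,b}` to a vertex; the resulting tree `T` is the Bass–Serre tree of the
one-edge splitting of `G` associated to the edge `{a, b}`. -/
def IsCollapseMap {G V W : Type} [Group G] (X : SimpleGraph V) (ρ : G →* Equiv.Perm V)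
    (a b : V) (T : SimpleGraph W) (σ : G →* Equiv.Perm W) (q : V → W) : Prop :=
  (∀ (g : G) (x : V), q (ρ g x) = σ g (q x)) ∧ Function.Surjective q ∧
  T.Adj (q a) (q b) ∧
  (∀ x y : V, q x = q y ↔ ∃ p : X.Walk x y, ∀ e ∈ p.edges, e ∉ EdgeOrbit ρ a b) ∧
  (∀ u' v' : W, T.Adj u' v' →
    ∃ g : G, (σ g (q a) = u' ∧ σ g (q b) = v') ∨ (σ g (q a) = v' ∧ σ g (q b) = u'))

/-- `f : W' → W` is a nontrivial fold of `G`-trees: an equivariant surjective graph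
morphism identifying two distinct edges with a common initial vertex. -/
def NontrivialFoldOnto {G W' W : Type} [Group G]
    (T' : SimpleGraph W') (σ' : G →* Equiv.Perm W')
    (T : SimpleGraph W) (σ : G →* Equiv.Perm W) (f : W' → W) : Prop :=
  (∀ (g : G) (x : W'), f (σ' g x) = σ g (f x)) ∧ Function.Surjective f ∧
  (∀ x y : W', T'.Adj x y → T.Adj (f x) (f y)) ∧
  ∃ x y y' : W', T'.Adj x y ∧ T'.Adj x y' ∧ y ≠ y' ∧ f y = f y'


/-! ### Auxiliary tree geometry -/

namespace GBSAux

open SimpleGraph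

section TreeGeometry

variable {V : Type} {X : SimpleGraph V}

/-- The unique path between two vertices of a tree. -/
noncomputable def tp (hT : X.IsTree) (u v : V) : X.Walk u v :=
  (hT.existsUnique_path u v).choose

lemma tp_isPath (hT : X.IsTree) (u v : V) : (tp hT u v).IsPath :=
  (hT.existsUnique_path u v).choose_spec.1

lemma tp_eq (hT : X.IsTree) {u v : V} (p : X.Walk u v) (hp : p.IsPath) :
    p = tp hT u v :=
  (hT.existsUnique_path u v).choose_spec.2 p hp

/-- Tree distance. -/
noncomputable def dd (hT : X.IsTree) (u v : V) : ℕ := (tp hT u v).length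

lemma tp_edges_subset (hT : X.IsTree) {u v : V} (w : X.Walk u v) :
    (tp hT u v).edges ⊆ w.edges := by
  classical
  rw [← tp_eq hT w.bypass w.bypass_isPath]
  exact w.edges_bypass_subset

lemma dd_le (hT : X.IsTree) {u v : V} (w : X.Walk u v) : dd hT u v ≤ w.length := by
  classical
  have h1 : (tp hT u v).edges.toFinset.card = (tp hT u v).edges.length :=
    List.toFinset_card_of_nodup (tp_isPath hT u v).isTrail.edges_nodup
  have h2 : (tp hT u v).edges.toFinset ⊆ w.edges.toFinset := by
    intro e he
    rw [List.mem_toFinset] at he ⊢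
    exact tp_edges_subset hT w he
  calc dd hT u v = (tp hT u v).edges.length := (Walk.length_edges _).symm
    _ = (tp hT u v).edges.toFinset.card := h1.symm
    _ ≤ w.edges.toFinset.card := Finset.card_le_card h2
    _ ≤ w.edges.length := w.edges.toFinset_card_le
    _ = w.length := Walk.length_edges _

lemma dd_self (hT : X.IsTree) (u : V) : dd hT u u = 0 := by
  have h := tp_eq hT (Walk.nil : X.Walk u u) Walk.IsPath.nil
  simp [dd, ← h]

lemma dd_eq_zero (hT : X.IsTree) {u v : V} (h : dd hT u v = 0) : u = v :=
  Walk.eq_of_length_eq_zero h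

lemma dd_comm (hT : X.IsTree) (u v : V) : dd hT u v = dd hT v u := by
  have h := tp_eq hT (tp hT u v).reverse (tp_isPath hT u v).reverse
  simp [dd, ← h]

lemma dd_triangle (hT : X.IsTree) (u v w : V) :
    dd hT u w ≤ dd hT u v + dd hT v w := by
  have h := dd_le hT ((tp hT u v).append (tp hT v w))
  simpa [Walk.length_append, dd] using h

lemma dd_adj (hT : X.IsTree) {u v : V} (h : X.Adj u v) : dd hT u v ≤ 1 := by
  have h2 := dd_le hT (Walk.cons h Walk.nil)
  simpa using h2

lemma walk_adj_of_length_one {u v : V} {p : X.Walk u v} (h : p.length = 1) : X.Adj u v := by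
  cases p with
  | nil => simp at h
  | cons hadj p' =>
    simp only [Walk.length_cons, Nat.add_right_cancel_iff, Nat.add_eq_right] at h
    have h2 := Walk.eq_of_length_eq_zero h
    exact h2 ▸ hadj

lemma adj_of_dd_one (hT : X.IsTree) {u v : V} (h : dd hT u v = 1) : X.Adj u v :=
  walk_adj_of_length_one h

lemma path_self_nil {u : V} (p : X.Walk u u) (hp : p.IsPath) : p = Walk.nil := by
  cases p with
  | nil => rfl
  | cons h q =>
    exfalso
    have hn := hp.support_nodup
    simp only [Walk.support_cons, List.nodup_cons] at hn
    exact hn.1 q.end_mem_support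

lemma onpath_add (hT : X.IsTree) {u v z : V} (hz : z ∈ (tp hT u v).support) :
    dd hT u z + dd hT z v = dd hT u v := by
  classical
  have hsplit := (tp hT u v).take_spec hz
  have h1 : (tp hT u v).takeUntil z hz = tp hT u z :=
    tp_eq hT _ ((tp_isPath hT u v).takeUntil hz)
  have h2 : (tp hT u v).dropUntil z hz = tp hT z v :=
    tp_eq hT _ ((tp_isPath hT u v).dropUntil hz)
  have h3 := congrArg Walk.length hsplit
  rw [Walk.length_append, h1, h2] at h3
  exact h3

lemma collinear (hT : X.IsTree) {u v z z' : V} (hz : z ∈ (tp hT u v).support)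
    (hz' : z' ∈ (tp hT u v).support) (hle : dd hT u z ≤ dd hT u z') :
    dd hT u z + dd hT z z' = dd hT u z' := by
  classical
  have hsplit := (tp hT u v).take_spec hz'
  have h1 : (tp hT u v).takeUntil z' hz' = tp hT u z' :=
    tp_eq hT _ ((tp_isPath hT u v).takeUntil hz')
  have h2 : (tp hT u v).dropUntil z' hz' = tp hT z' v :=
    tp_eq hT _ ((tp_isPath hT u v).dropUntil hz')
  have hz2 : z ∈ ((tp hT u v).takeUntil z' hz').support ∨
      z ∈ ((tp hT u v).dropUntil z' hz').support := by
    rw [← Walk.mem_support_append_iff, hsplit]; exact hz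
  rcases hz2 with h | h
  · rw [h1] at h
    exact onpath_add hT h
  · rw [h2] at h
    have e3 := onpath_add hT h
    have e1 := onpath_add hT hz
    have e2 := onpath_add hT hz'
    have hzz' : dd hT z' z = 0 := by omega
    have hzz : z' = z := dd_eq_zero hT hzz'
    subst hzz
    have := dd_self hT z'
    omega

lemma kpoint_aux (hT : X.IsTree) {u v : V} (p : X.Walk u v) :
    p.IsPath → ∀ k : ℕ, k ≤ p.length →
    ∃ z ∈ p.support, dd hT u z = k ∧ dd hT z v + k = p.length := by
  induction p with
  | nil =>
    intro _ k hk
    have hk0 : k = 0 := Nat.le_zero.mp hk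
    subst hk0
    exact ⟨_, by simp, dd_self hT _, by simp [dd_self hT _]⟩
  | @cons a c w hadj p' ih =>
    intro hp k hk
    rcases Nat.eq_zero_or_pos k with rfl | hkpos
    · refine ⟨a, by simp, dd_self hT a, ?_⟩
      have hpath := tp_eq hT _ hp
      simp [dd, ← hpath]
    · obtain ⟨k', rfl⟩ : ∃ k', k = k' + 1 := ⟨k - 1, by omega⟩
      obtain ⟨z, hzmem, hz1, hz2⟩ := ih hp.of_cons k' (by
        simp only [Walk.length_cons] at hk; omega)
      have hub : dd hT a z ≤ dd hT a c + dd hT c z := dd_triangle hT a c z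
      have hadj1 : dd hT a c ≤ 1 := dd_adj hT hadj
      have hlb : dd hT a w ≤ dd hT a z + dd hT z w := dd_triangle hT a z w
      have hlen : dd hT a w = p'.length + 1 := by
        have hpath := tp_eq hT _ hp
        simp [dd, ← hpath]
      refine ⟨z, by simp [hzmem], by omega, by simp only [Walk.length_cons]; omega⟩

lemma kpoint_exists (hT : X.IsTree) {u v : V} (k : ℕ) (hk : k ≤ dd hT u v) :
    ∃ z ∈ (tp hT u v).support, dd hT u z = k := by
  obtain ⟨z, h1, h2, _⟩ := kpoint_aux hT (tp hT u v) (tp_isPath hT u v) k hk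
  exact ⟨z, h1, h2⟩

lemma kpoint_unique (hT : X.IsTree) {u v z z' : V} (hz : z ∈ (tp hT u v).support)
    (hz' : z' ∈ (tp hT u v).support) (he : dd hT u z = dd hT u z') : z = z' := by
  have h := collinear hT hz hz' (le_of_eq he)
  exact dd_eq_zero hT (by omega)

lemma takeUntil_start_support [DecidableEq V] {u v : V} (p : X.Walk u v) (hp : p.IsPath)
    (h : u ∈ p.support) : (p.takeUntil u h).support = [u] := by
  have h2 := path_self_nil _ (hp.takeUntil h)
  rw [h2, Walk.support_nil]

lemma median_aux (hT : X.IsTree) [DecidableEq V] {u w : V} (P : X.Walk u w) :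
    P.IsPath → ∀ {v : V} (Q : X.Walk v w), Q.IsPath →
    ∃ (m : V) (hm : m ∈ P.support), m ∈ Q.support ∧
      ∀ z, z ∈ (P.takeUntil m hm).support → z ∈ Q.support → z = m := by
  induction P with
  | nil =>
    intro hP v Q _
    refine ⟨_, Walk.start_mem_support _, Q.end_mem_support, ?_⟩
    intro z hz _
    rw [takeUntil_start_support _ hP _] at hz
    simpa using hz
  | @cons a c w hadj p' ih =>
    intro hP v Q hQ
    by_cases ha : a ∈ Q.support
    · refine ⟨a, Walk.start_mem_support _, ha, ?_⟩
      intro z hz _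
      rw [takeUntil_start_support _ hP _] at hz
      simpa using hz
    · obtain ⟨m, hmP, hmQ, hspec⟩ := ih hP.of_cons Q hQ
      have hma : a ≠ m := fun h => ha (h ▸ hmQ)
      have hmP' : m ∈ (Walk.cons hadj p').support := by simp [hmP]
      refine ⟨m, hmP', hmQ, ?_⟩
      intro z hz hzQ
      have hred : (Walk.cons hadj p').takeUntil m hmP' =
          Walk.cons hadj (p'.takeUntil m hmP) := by
        rw [Walk.takeUntil]
        simp [hma]
      rw [hred, Walk.support_cons] at hz
      rcases List.mem_cons.mp hz with rfl | hz2
      · exact absurd hzQ ha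
      · exact hspec z hz2 hzQ

lemma median (hT : X.IsTree) (u v w : V) :
    ∃ m : V, m ∈ (tp hT u v).support ∧ m ∈ (tp hT u w).support ∧ m ∈ (tp hT v w).support ∧
      dd hT u m + dd hT m v = dd hT u v ∧ dd hT u m + dd hT m w = dd hT u w ∧
      dd hT v m + dd hT m w = dd hT v w := by
  classical
  obtain ⟨m, hmP, hmQ, hspec⟩ :=
    median_aux hT (tp hT u w) (tp_isPath hT u w) (tp hT v w) (tp_isPath hT v w)
  have hPm : (tp hT u w).takeUntil m hmP = tp hT u m :=
    tp_eq hT _ ((tp_isPath hT u w).takeUntil hmP)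
  have hQm : (tp hT v w).takeUntil m hmQ = tp hT v m :=
    tp_eq hT _ ((tp_isPath hT v w).takeUntil hmQ)
  have hmv : tp hT m v = (tp hT v m).reverse := by
    rw [tp_eq hT (tp hT v m).reverse (tp_isPath hT v m).reverse]
  have hWpath : ((tp hT u m).append (tp hT m v)).IsPath := by
    rw [Walk.isPath_def, Walk.support_append, List.nodup_append]
    refine ⟨(tp_isPath hT u m).support_nodup, ((tp_isPath hT m v).support_nodup).tail, ?_⟩
    intro s hs1 s' hs2 hss
    subst hss
    have hs2' : s ∈ (tp hT m v).support := List.mem_of_mem_tail hs2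
    have hsne : s ≠ m := by
      intro h
      have hnd := (tp_isPath hT m v).support_nodup
      rw [(tp hT m v).support_eq_cons, List.nodup_cons] at hnd
      exact hnd.1 (h ▸ hs2)
    apply hsne
    apply hspec s
    · rw [hPm]; exact hs1
    · have hs3 : s ∈ (tp hT v m).support := by
        rw [hmv, Walk.support_reverse, List.mem_reverse] at hs2'
        exact hs2'
      rw [← hQm] at hs3
      exact (tp hT v w).support_takeUntil_subset hmQ hs3
  have hW : (tp hT u m).append (tp hT m v) = tp hT u v := tp_eq hT _ hWpath
  have hm_uv : m ∈ (tp hT u v).support := by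
    rw [← hW, Walk.mem_support_append_iff]
    exact Or.inl (tp hT u m).end_mem_support
  have hlen := congrArg Walk.length hW
  rw [Walk.length_append] at hlen
  exact ⟨m, hm_uv, hmP, hmQ, hlen, onpath_add hT hmP, onpath_add hT hmQ⟩

lemma between_mem (hT : X.IsTree) {u v z : V} (h : dd hT u z + dd hT z v = dd hT u v) :
    z ∈ (tp hT u v).support := by
  obtain ⟨m, hm1, _, _, s1, s2, s3⟩ := median hT u v z
  have c1 : dd hT z v = dd hT v z := dd_comm hT z v
  have c2 : dd hT m v = dd hT v m := dd_comm hT m v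
  have hz : dd hT m z = 0 := by omega
  have hz2 := dd_eq_zero hT hz
  exact hz2 ▸ hm1

lemma center_key (hT : X.IsTree) {u v u' v' : V} {k : ℕ}
    (hD' : dd hT u' v' = dd hT u v)
    (b1 : dd hT u' u ≤ dd hT u v) (b2 : dd hT u' v ≤ dd hT u v)
    (b3 : dd hT v' u ≤ dd hT u v) (b4 : dd hT v' v ≤ dd hT u v)
    (hk1 : dd hT u v ≤ 2 * k + 1) (hk2 : 2 * k ≤ dd hT u v + 1)
    {z : V} (hz : z ∈ (tp hT u' v').support) (hzk : dd hT u' z = k) :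
    z ∈ (tp hT u v).support ∧ (dd hT u z = k ∨ dd hT u z + k = dd hT u v) := by
  set D := dd hT u v with hDdef
  have hzadd := onpath_add hT hz
  have hkD : k ≤ D := by omega
  obtain ⟨j₁, hj₁uv, _, _, e11, e12, e13⟩ := median hT u v u'
  obtain ⟨j₂, hj₂uv, _, _, e21, e22, e23⟩ := median hT u v v'
  -- translate with comm
  have c1 : dd hT u u' = dd hT u' u := dd_comm hT u u'
  have c2 : dd hT v u' = dd hT u' v := dd_comm hT v u'
  have c3 : dd hT u v' = dd hT v' u := dd_comm hT u v'
  have c4 : dd hT v v' = dd hT v' v := dd_comm hT v v'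
  have c5 : dd hT j₁ u' = dd hT u' j₁ := dd_comm hT j₁ u'
  have c6 : dd hT j₂ v' = dd hT v' j₂ := dd_comm hT j₂ v'
  have c7 : dd hT v j₁ = dd hT j₁ v := dd_comm hT v j₁
  have c8 : dd hT v j₂ = dd hT j₂ v := dd_comm hT v j₂
  -- main triangle
  have tri0 : dd hT u' v' ≤ dd hT u' j₁ + dd hT j₁ v' := dd_triangle hT u' j₁ v'
  have tri0' : dd hT j₁ v' ≤ dd hT j₁ j₂ + dd hT j₂ v' := dd_triangle hT j₁ j₂ v'
  rcases le_total (dd hT u j₁) (dd hT u j₂) with hcase | hcase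
  · -- uncrossed case
    have hcol := collinear hT hj₁uv hj₂uv hcase
    -- equalities via omega
    have key : dd hT u' j₁ = dd hT u j₁ ∧ dd hT v' j₂ = dd hT j₂ v ∧
        2 * dd hT u j₁ ≤ D ∧ D ≤ 2 * dd hT u j₂ := by omega
    obtain ⟨k1, k2, k3, k4⟩ := key
    have hα : dd hT u j₁ ≤ k := by omega
    have hα₂ : k ≤ dd hT u j₂ := by omega
    obtain ⟨m, hmsup, hmk⟩ := kpoint_exists hT k hkD
    -- dd u' m ≤ k
    have t1 : dd hT u' m ≤ dd hT u' j₁ + dd hT j₁ m := dd_triangle hT u' j₁ m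
    have col1 : dd hT u j₁ + dd hT j₁ m = dd hT u m := collinear hT hj₁uv hmsup (by omega)
    have t2 : dd hT m v' ≤ dd hT m j₂ + dd hT j₂ v' := dd_triangle hT m j₂ v'
    have col2 : dd hT u m + dd hT m j₂ = dd hT u j₂ := collinear hT hmsup hj₂uv (by omega)
    have t3 : dd hT u' v' ≤ dd hT u' m + dd hT m v' := dd_triangle hT u' m v'
    have q1 : dd hT u' m = k := by omega
    have q2 : dd hT m v' = D - k := by omega
    have hbm : m ∈ (tp hT u' v').support := between_mem hT (by omega)
    have hzm : z = m := kpoint_unique hT hz hbm (by omega)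
    subst hzm
    exact ⟨hmsup, Or.inl hmk⟩
  · -- crossed case
    have hcol := collinear hT hj₂uv hj₁uv hcase
    have c11 : dd hT j₁ j₂ = dd hT j₂ j₁ := dd_comm hT j₁ j₂
    have key : dd hT u' j₁ = D - dd hT u j₁ ∧ dd hT v' j₂ = dd hT u j₂ ∧
        D ≤ 2 * dd hT u j₁ ∧ 2 * dd hT u j₂ ≤ D := by omega
    obtain ⟨k1, k2, k3, k4⟩ := key
    have hα : D - k ≤ dd hT u j₁ := by omega
    have hα₂ : dd hT u j₂ ≤ D - k := by omega
    obtain ⟨m, hmsup, hmk⟩ := kpoint_exists hT (u := u) (v := v) (D - k) (by omega)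
    have t1 : dd hT u' m ≤ dd hT u' j₁ + dd hT j₁ m := dd_triangle hT u' j₁ m
    have col1 : dd hT u m + dd hT m j₁ = dd hT u j₁ := collinear hT hmsup hj₁uv (by omega)
    have c9 : dd hT j₁ m = dd hT m j₁ := dd_comm hT j₁ m
    have t2 : dd hT m v' ≤ dd hT m j₂ + dd hT j₂ v' := dd_triangle hT m j₂ v'
    have col2 : dd hT u j₂ + dd hT j₂ m = dd hT u m := collinear hT hj₂uv hmsup (by omega)
    have c10 : dd hT j₂ m = dd hT m j₂ := dd_comm hT j₂ m
    have t3 : dd hT u' v' ≤ dd hT u' m + dd hT m v' := dd_triangle hT u' m v'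
    have q1 : dd hT u' m = k := by omega
    have q2 : dd hT m v' = D - k := by omega
    have hbm : m ∈ (tp hT u' v').support := between_mem hT (by omega)
    have hzm : z = m := kpoint_unique hT hz hbm (by omega)
    subst hzm
    exact ⟨hmsup, Or.inr (by omega)⟩

end TreeGeometry

section Action

variable {G : Type} [Group G] {V : Type} {X : SimpleGraph V}

/-- The graph homomorphism induced by the action of `g`. -/
def ghom (ρ : G →* Equiv.Perm V) (pa : PreservesAdj X ρ) (g : G) : X →g X :=
  ⟨⇑(ρ g), fun {p q} h => pa g p q h⟩

@[simp] lemma ghom_apply (ρ : G →* Equiv.Perm V) (pa : PreservesAdj X ρ) (g : G) (v : V) :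
    ghom ρ pa g v = ρ g v := rfl

lemma tp_map (hT : X.IsTree) (ρ : G →* Equiv.Perm V) (pa : PreservesAdj X ρ) (g : G)
    (u v : V) : tp hT (ρ g u) (ρ g v) = (tp hT u v).map (ghom ρ pa g) := by
  refine (tp_eq hT ((tp hT u v).map (ghom ρ pa g)) ?_).symm
  exact Walk.map_isPath_of_injective (ρ g).injective (tp_isPath hT u v)

lemma dd_act (hT : X.IsTree) (ρ : G →* Equiv.Perm V) (pa : PreservesAdj X ρ) (g : G)
    (u v : V) : dd hT (ρ g u) (ρ g v) = dd hT u v := by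
  unfold dd
  erw [tp_map hT ρ pa g u v, Walk.length_map]

lemma fix_support (hT : X.IsTree) {ρ : G →* Equiv.Perm V} (pa : PreservesAdj X ρ) {g : G}
    {u v : V} (hu : ρ g u = u) (hv : ρ g v = v) :
    ∀ z ∈ (tp hT u v).support, ρ g z = z := by
  have hmap : ((tp hT u v).map (ghom ρ pa g)).copy hu hv = tp hT u v := by
    apply tp_eq hT
    erw [Walk.isPath_copy]
    exact Walk.map_isPath_of_injective (ρ g).injective (tp_isPath hT u v)
  have hsup := congrArg Walk.support hmap
  erw [Walk.support_copy, Walk.support_map] at hsup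
  intro z hz
  have : ∀ (l : List V), l.map (⇑(ρ g)) = l → ∀ s ∈ l, ρ g s = s := by
    intro l
    induction l with
    | nil => intro _ s hs; simp at hs
    | cons a l ih =>
      intro hmapl s hs
      simp only [List.map_cons, List.cons.injEq] at hmapl
      rcases List.mem_cons.mp hs with rfl | hs2
      · exact hmapl.1
      · exact ih hmapl.2 s hs2
  exact this _ hsup z hz

lemma perm_fix_pow {W : Type} (ψ : Equiv.Perm W) {x : W} (h : ψ x = x) (n : ℕ) :
    (ψ ^ n) x = x := by
  induction n with
  | zero => simp
  | succ n ih => rw [pow_succ, Equiv.Perm.mul_apply, h, ih]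

lemma perm_fix_zpow {W : Type} (ψ : Equiv.Perm W) {x : W} (h : ψ x = x) (k : ℤ) :
    (ψ ^ k) x = x := by
  rcases k with n | n
  · simpa using perm_fix_pow ψ h n
  · rw [zpow_negSucc]
    have h2 := perm_fix_pow ψ h (n + 1)
    have h3 := congrArg (⇑((ψ ^ (n + 1))⁻¹)) h2
    simpa using h3.symm

lemma perm_fix_natAbs {W : Type} (ψ : Equiv.Perm W) {x : W} {p : ℤ} (hp : (ψ ^ p) x = x) :
    (ψ ^ p.natAbs) x = x := by
  rcases Int.natAbs_eq p with he | he
  · rw [he, zpow_natCast] at hp; exact hp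
  · rw [he, zpow_neg, zpow_natCast] at hp
    have h3 := congrArg (⇑(ψ ^ p.natAbs)) hp
    simpa using h3.symm

/-- A finite nonempty invariant set of vertices yields a fixed vertex
(no inversions, tree). -/
lemma exists_fixed_of_finite_invariant (hT : X.IsTree) {ρ : G →* Equiv.Perm V}
    (pa : PreservesAdj X ρ) (ni : NoInversions X ρ) (φ : G) (U : Finset V)
    (hne : U.Nonempty) (hinv : ∀ z ∈ U, ρ φ z ∈ U) : ∃ z : V, ρ φ z = z := by
  classical
  have hne2 : ((U ×ˢ U).image fun p => dd hT p.1 p.2).Nonempty := (hne.product hne).image _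
  set D := ((U ×ˢ U).image fun p => dd hT p.1 p.2).max' hne2 with hDdef
  have hbound : ∀ p ∈ U, ∀ q ∈ U, dd hT p q ≤ D := by
    intro p hp q hq
    have hle := Finset.le_max' ((U ×ˢ U).image fun p => dd hT p.1 p.2) (dd hT p q)
      (Finset.mem_image.mpr ⟨(p, q), Finset.mem_product.mpr ⟨hp, hq⟩, rfl⟩)
    rw [hDdef]
    exact hle
  obtain ⟨pq, hpq, hpqD⟩ := Finset.mem_image.mp
    (((U ×ˢ U).image fun p => dd hT p.1 p.2).max'_mem hne2)
  obtain ⟨hu, hv⟩ := Finset.mem_product.mp hpq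
  set u := pq.1 with hudef
  set v := pq.2 with hvdef
  have hDuv : dd hT u v = D := hpqD
  rcases Nat.eq_zero_or_pos D with hD0 | hDpos
  · refine ⟨u, ?_⟩
    have h1 : dd hT (ρ φ u) u ≤ D := hbound _ (hinv u hu) _ hu
    rw [hD0] at h1
    exact dd_eq_zero hT (Nat.le_zero.mp h1)
  · set k₁ := D / 2 with hk₁
    set k₂ := D - D / 2 with hk₂
    obtain ⟨m₁, hm₁s, hm₁⟩ := kpoint_exists hT (u := u) (v := v) k₁ (by omega)
    obtain ⟨m₂, hm₂s, hm₂⟩ := kpoint_exists hT (u := u) (v := v) k₂ (by omega)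
    have hu' : ρ φ u ∈ U := hinv u hu
    have hv' : ρ φ v ∈ U := hinv v hv
    have hD' : dd hT (ρ φ u) (ρ φ v) = dd hT u v := dd_act hT ρ pa φ u v
    have hb1 : dd hT (ρ φ u) u ≤ dd hT u v := hDuv ▸ hbound _ hu' _ hu
    have hb2 : dd hT (ρ φ u) v ≤ dd hT u v := hDuv ▸ hbound _ hu' _ hv
    have hb3 : dd hT (ρ φ v) u ≤ dd hT u v := hDuv ▸ hbound _ hv' _ hu
    have hb4 : dd hT (ρ φ v) v ≤ dd hT u v := hDuv ▸ hbound _ hv' _ hv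
    have hsupmap : ∀ z ∈ (tp hT u v).support, ρ φ z ∈ (tp hT (ρ φ u) (ρ φ v)).support := by
      intro z hzs
      erw [tp_map hT ρ pa φ u v, Walk.support_map]
      exact List.mem_map_of_mem hzs
    -- images of the two middle points
    have hφm₁s := hsupmap m₁ hm₁s
    have hφm₂s := hsupmap m₂ hm₂s
    have hφm₁k : dd hT (ρ φ u) (ρ φ m₁) = k₁ := by rw [dd_act hT ρ pa]; exact hm₁
    have hφm₂k : dd hT (ρ φ u) (ρ φ m₂) = k₂ := by rw [dd_act hT ρ pa]; exact hm₂
    have hc₁ := center_key hT hD' hb1 hb2 hb3 hb4 (by omega) (by omega) hφm₁s hφm₁k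
    have hc₂ := center_key hT hD' hb1 hb2 hb3 hb4 (by omega) (by omega) hφm₂s hφm₂k
    rcases Nat.even_or_odd D with ⟨l, hl⟩ | ⟨l, hl⟩
    · -- even: k₁ = k₂
      have hkk : k₁ = k₂ := by omega
      refine ⟨m₁, ?_⟩
      apply kpoint_unique hT hc₁.1 hm₁s
      rcases hc₁.2 with h | h
      · omega
      · omega
    · -- odd
      have hkk : k₂ = k₁ + 1 := by omega
      have hcol := collinear hT hm₁s hm₂s (by omega)
      have hd12 : dd hT m₁ m₂ = 1 := by omega
      have hadj12 : X.Adj m₁ m₂ := adj_of_dd_one hT hd12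
      have hne12 : m₁ ≠ m₂ := hadj12.ne
      rcases hc₁.2 with h1 | h1
      · exact ⟨m₁, kpoint_unique hT hc₁.1 hm₁s (by omega)⟩
      · -- ρ φ m₁ = m₂
        have hm₁m₂ : ρ φ m₁ = m₂ := kpoint_unique hT hc₁.1 hm₂s (by omega)
        rcases hc₂.2 with h2 | h2
        · -- ρ φ m₂ = m₂ : contradiction with injectivity
          have hm₂m₂ : ρ φ m₂ = m₂ := kpoint_unique hT hc₂.1 hm₂s (by omega)
          exfalso
          exact hne12 ((ρ φ).injective (by rw [hm₁m₂, hm₂m₂]))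
        · have hm₂m₁ : ρ φ m₂ = m₁ := kpoint_unique hT hc₂.1 hm₁s (by omega)
          exact absurd ⟨hm₁m₂, hm₂m₁⟩ (ni φ m₁ m₂ hadj12)

/-- Graph homomorphism from a map preserving adjacency. -/
def ghom' {W' W : Type} {T' : SimpleGraph W'} {T : SimpleGraph W} (f : W' → W)
    (hfm : ∀ x y : W', T'.Adj x y → T.Adj (f x) (f y)) : T' →g T :=
  ⟨f, fun {p q} h => hfm p q h⟩

end Action

section Collapse

variable {G : Type} [Group G]

lemma mem_vStab {V : Type} {ρ : G →* Equiv.Perm V} {v : V} {g : G} :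
    g ∈ vStab ρ v ↔ ρ g v = v := by
  simp [vStab, Subgroup.mem_comap, MulAction.mem_stabilizer_iff, Equiv.Perm.smul_def]

lemma mem_eStab {V : Type} {ρ : G →* Equiv.Perm V} {u v : V} {g : G} :
    g ∈ eStab ρ u v ↔ ρ g u = u ∧ ρ g v = v := by
  simp [eStab, Subgroup.mem_inf, mem_vStab]

/-- If `g` fixes both endpoints of the collapsed edge in the quotient tree, it fixes
both endpoints of the original edge. -/
lemma collapse_fix {V W : Type} {X : SimpleGraph V} {ρ : G →* Equiv.Perm V}
    (hTX : X.IsTree) (paX : PreservesAdj X ρ) (niX : NoInversions X ρ)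
    {a b : V} (hab : X.Adj a b) {σ : G →* Equiv.Perm W} {q : V → W}
    (hqe : ∀ (g : G) (x : V), q (ρ g x) = σ g (q x))
    (hqcomp : ∀ x y : V, q x = q y ↔ ∃ p : X.Walk x y, ∀ e ∈ p.edges, e ∉ EdgeOrbit ρ a b)
    {g : G} (h1 : σ g (q a) = q a) (h2 : σ g (q b) = q b) : ρ g a = a ∧ ρ g b = b := by
  have e1 : q (ρ g a) = q a := by rw [hqe]; exact h1
  have e2 : q (ρ g b) = q b := by rw [hqe]; exact h2
  obtain ⟨W1, hW1⟩ := (hqcomp (ρ g a) a).mp e1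
  obtain ⟨W2, hW2⟩ := (hqcomp (ρ g b) b).mp e2
  have hadj' : X.Adj (ρ g a) (ρ g b) := paX g a b hab
  set Wk : X.Walk a b := W1.reverse.append (Walk.cons hadj' W2) with hWk
  have hsingle : tp hTX a b = Walk.cons hab (Walk.nil) := by
    symm
    apply tp_eq hTX
    rw [Walk.isPath_def]
    simp [hab.ne]
  have hedge : s(a, b) ∈ Wk.edges := by
    apply tp_edges_subset hTX Wk
    rw [hsingle]
    simp
  have horbab : s(a, b) ∈ EdgeOrbit ρ a b := ⟨1, by simp⟩
  rw [hWk, Walk.edges_append, Walk.edges_cons] at hedge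
  rcases List.mem_append.mp hedge with hin | hin
  · exfalso
    rw [Walk.edges_reverse, List.mem_reverse] at hin
    exact hW1 _ hin horbab
  · rcases List.mem_cons.mp hin with heq | hin2
    · rw [Sym2.eq_iff] at heq
      rcases heq with ⟨ha, hb⟩ | ⟨ha, hb⟩
      · exact ⟨ha.symm, hb.symm⟩
      · exact absurd ⟨hb.symm, ha.symm⟩ (niX g a b hab)
    · exact absurd horbab (hW2 _ hin2)

/-- One edge orbit: relate any two (ordered) edges. -/
lemma rel_edges {W' : Type} {T' : SimpleGraph W'} {σ' : G →* Equiv.Perm W'}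
    (horb : OneEdgeOrbit T' σ') {x y c d : W'} (h1 : T'.Adj x y) (h2 : T'.Adj c d) :
    ∃ g : G, (σ' g x = c ∧ σ' g y = d) ∨ (σ' g x = d ∧ σ' g y = c) := by
  obtain ⟨u, v, huv, htrans⟩ := horb
  obtain ⟨g₁, hg₁⟩ := htrans x y h1
  obtain ⟨g₂, hg₂⟩ := htrans c d h2
  refine ⟨g₂ * g₁⁻¹, ?_⟩
  have e : ∀ z : W', σ' (g₂ * g₁⁻¹) (σ' g₁ z) = σ' g₂ z := by
    intro z
    simp [map_mul, map_inv, Equiv.Perm.mul_apply]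
  rcases hg₁ with ⟨ha, hb⟩ | ⟨ha, hb⟩ <;> rcases hg₂ with ⟨hc, hd⟩ | ⟨hc, hd⟩
  · exact Or.inl ⟨by rw [← ha, e, hc], by rw [← hb, e, hd]⟩
  · exact Or.inr ⟨by rw [← ha, e, hc], by rw [← hb, e, hd]⟩
  · exact Or.inr ⟨by rw [← hb, e, hd], by rw [← ha, e, hc]⟩
  · exact Or.inl ⟨by rw [← hb, e, hd], by rw [← ha, e, hc]⟩

end Collapse
end GBSAux

open GBSAux in
/-- Let `X` be a cocompact generalized Baumslag–Solitar tree,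
`{a, b}` an edge, and `X̂` (here `T`) the one-edge splitting obtained by
collapsing the components of `X − G⬝{a,b}`.  If `X̂` admits a nontrivial fold
`f : Y → X̂` at the image of `a`, where the edge `{x, y}` of `Y` mapping to
`{q a, q b}` has stabilizer a proper nontrivial subgroup of `G_e = eStab ρ a b`,
then `G_e` equals the stabilizer of the endpoint `b`. -/
theorem gbs_fold_forces_equal_stabilizer {G V W W' : Type} [Group G]
    (X : SimpleGraph V) (ρ : G →* Equiv.Perm V) (hX : IsGBSTree X ρ)
    (hcocpt : Finite (Quot fun x y : V => ∃ g : G, ρ g x = y))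
    (a b : V) (hab : X.Adj a b)
    (T : SimpleGraph W) (σ : G →* Equiv.Perm W) (q : V → W)
    (hT : IsGTree T σ) (hq : IsCollapseMap X ρ a b T σ q)
    (T' : SimpleGraph W') (σ' : G →* Equiv.Perm W') (f : W' → W)
    (hT' : IsGTree T' σ') (horb : OneEdgeOrbit T' σ')
    (hf : NontrivialFoldOnto T' σ' T σ f)
    (x y : W') (hxy : T'.Adj x y) (hfx : f x = q a) (hfy : f y = q b)
    (hfold : ∃ y'' : W', T'.Adj x y'' ∧ y'' ≠ y ∧ f y'' = f y)
    (hstab : eStab σ' x y < eStab ρ a b ∧ eStab σ' x y ≠ ⊥) :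
    eStab ρ a b = vStab ρ b := by
  classical
  obtain ⟨hGt, hvcyc, hecyc⟩ := hX
  obtain ⟨hTX, paX, niX⟩ := hGt
  obtain ⟨hTT, paT, niT⟩ := hT
  obtain ⟨hTY, paY, niY⟩ := hT'
  obtain ⟨hfe, hfs, hfm, -⟩ := hf
  obtain ⟨hqe, hqs, hqadj, hqcomp, hqtrans⟩ := hq
  obtain ⟨y'', hxy'', hy''ne, hfy''⟩ := hfold
  -- the infinite cyclic stabilizer of b, with generator γ
  obtain ⟨hcyc, hinf⟩ := hvcyc b
  obtain ⟨γ₀, hγ₀⟩ := @IsCyclic.exists_generator (↥(vStab ρ b)) _ hcyc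
  set γ : G := (γ₀ : G) with hγdef
  have hγmem : γ ∈ vStab ρ b := γ₀.property
  have hgen : ∀ w ∈ vStab ρ b, ∃ k : ℤ, γ ^ k = w := by
    intro w hw
    obtain ⟨k, hk⟩ := Subgroup.mem_zpowers_iff.mp (hγ₀ ⟨w, hw⟩)
    refine ⟨k, ?_⟩
    have h2 := congrArg (Subtype.val) hk
    simpa using h2
  have hρb : ρ γ b = b := mem_vStab.mp hγmem
  have hσγb : σ γ (q b) = q b := by rw [← hqe, hρb]
  -- key reduction lemma
  have keyfix : ∀ g : G, σ g (q a) = q a → σ g (q b) = q b → ρ g a = a ∧ ρ g b = b :=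
    fun g h1 h2 => collapse_fix hTX paX niX hab hqe hqcomp h1 h2
  suffices hfixa : σ γ (q a) = q a by
    obtain ⟨hga, hgb⟩ := keyfix γ hfixa hσγb
    have hγe : γ ∈ eStab ρ a b := mem_eStab.mpr ⟨hga, hgb⟩
    apply le_antisymm
    · exact inf_le_right
    · intro w hw
      obtain ⟨k, rfl⟩ := hgen w hw
      exact Subgroup.zpow_mem _ hγe k
  -- the fold element h : fixes x, moves y to y''
  obtain ⟨h, hhcase⟩ := rel_edges horb hxy hxy''
  have hh : σ' h x = x ∧ σ' h y = y'' := by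
    rcases hhcase with h1 | h1
    · exact h1
    · exfalso
      have e1 : σ h (q a) = q b := by rw [← hfx, ← hfe, h1.1, hfy'', hfy]
      have e2 : σ h (q b) = q a := by rw [← hfy, ← hfe, h1.2, hfx]
      exact niT h (q a) (q b) hqadj ⟨e1, e2⟩
  have hhqa : σ h (q a) = q a := by rw [← hfx, ← hfe, hh.1]
  have hhqb : σ h (q b) = q b := by rw [← hfy, ← hfe, hh.2, hfy'', hfy]
  have hhb : ρ h b = b := (keyfix h hhqa hhqb).2
  obtain ⟨kh, hkh⟩ := hgen h (mem_vStab.mpr hhb)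
  -- γ is elliptic in Y
  obtain ⟨c, hcmem, hcne⟩ : ∃ c ∈ eStab σ' x y, c ≠ 1 := by
    by_contra hall
    push_neg at hall
    exact hstab.2 (Subgroup.eq_bot_iff_forall _ |>.mpr hall)
  have hcb : c ∈ vStab ρ b := (mem_eStab.mp ((le_of_lt hstab.1) hcmem)).2 |> mem_vStab.mpr
  obtain ⟨p, hp⟩ := hgen c hcb
  have hpne : p ≠ 0 := by
    intro h0
    rw [h0, zpow_zero] at hp
    exact hcne hp.symm
  have hcx : σ' c x = x := (mem_eStab.mp hcmem).1
  have hγpx : ((σ' γ) ^ p) x = x := by rw [← map_zpow, hp]; exact hcx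
  have hnpos : 1 ≤ p.natAbs := Int.natAbs_pos.mpr hpne
  have hγnx : ((σ' γ) ^ p.natAbs) x = x := perm_fix_natAbs (σ' γ) hγpx
  obtain ⟨z, hzfix⟩ := exists_fixed_of_finite_invariant hTY paY niY γ
      ((Finset.range p.natAbs).image (fun i => ((σ' γ) ^ i) x))
      ⟨x, Finset.mem_image.mpr ⟨0, Finset.mem_range.mpr hnpos, by simp⟩⟩
      (by
        intro z hz
        obtain ⟨i, hi, rfl⟩ := Finset.mem_image.mp hz
        rw [Finset.mem_range] at hi
        have hstep : σ' γ (((σ' γ) ^ i) x) = ((σ' γ) ^ (i + 1)) x := by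
          rw [pow_succ', Equiv.Perm.mul_apply]
        rcases Nat.lt_or_ge (i + 1) p.natAbs with hlt | hge
        · exact Finset.mem_image.mpr ⟨i + 1, Finset.mem_range.mpr hlt, hstep.symm⟩
        · have hin : i + 1 = p.natAbs := by omega
          rw [hstep, hin, hγnx]
          exact Finset.mem_image.mpr ⟨0, Finset.mem_range.mpr hnpos, by simp⟩)
  -- case analysis on the path from x to z in Y
  by_cases hcross : ∃ e ∈ (tp hTY x z).edges, Sym2.map f e = s(q a, q b)
  · -- crossing case : contradiction
    exfalso
    obtain ⟨e, he, hmape⟩ := hcross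
    revert he hmape
    refine Sym2.inductionOn e ?_
    intro c₀ d₀ he hmape
    have hadjcd : T'.Adj c₀ d₀ := (tp hTY x z).adj_of_mem_edges he
    have hc₀s : c₀ ∈ (tp hTY x z).support := (tp hTY x z).fst_mem_support_of_mem_edges he
    have hd₀s : d₀ ∈ (tp hTY x z).support := (tp hTY x z).snd_mem_support_of_mem_edges he
    rw [Sym2.map_pair_eq, Sym2.eq_iff] at hmape
    -- h fixes the whole path from x to z
    have hfixh : ∀ s ∈ (tp hTY x z).support, σ' h s = s := by
      rw [← hkh]
      apply fix_support hTY paY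
      · rw [hkh]; exact hh.1
      · rw [map_zpow]; exact perm_fix_zpow (σ' γ) hzfix kh
    have hfc₀ : σ' h c₀ = c₀ := hfixh c₀ hc₀s
    have hfd₀ : σ' h d₀ = d₀ := hfixh d₀ hd₀s
    -- relate edge (c₀, d₀) to the base edge (x, y)
    obtain ⟨g, hgcase⟩ := rel_edges horb hxy hadjcd
    have eqx : σ g (q a) = f (σ' g x) := by rw [← hfx, hfe]
    have eqy : σ g (q b) = f (σ' g y) := by rw [← hfy, hfe]
    have hgfix : σ g (q a) = q a ∧ σ g (q b) = q b := by
      rcases hgcase with ⟨hg1, hg2⟩ | ⟨hg1, hg2⟩ <;> rcases hmape with ⟨hm1, hm2⟩ | ⟨hm1, hm2⟩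
      · exact ⟨by rw [eqx, hg1, hm1], by rw [eqy, hg2, hm2]⟩
      · exact absurd ⟨by rw [eqx, hg1, hm1], by rw [eqy, hg2, hm2]⟩
          (niT g (q a) (q b) hqadj)
      · exact absurd ⟨by rw [eqx, hg1, hm2], by rw [eqy, hg2, hm1]⟩
          (niT g (q a) (q b) hqadj)
      · exact ⟨by rw [eqx, hg1, hm2], by rw [eqy, hg2, hm1]⟩
    have hgb : ρ g b = b := (keyfix g hgfix.1 hgfix.2).2
    obtain ⟨s, hs⟩ := hgen g (mem_vStab.mpr hgb)
    have hcomm : g⁻¹ * h * g = h := by rw [← hs, ← hkh]; group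
    have hyfix : σ' h y = y := by
      have e1 : σ' (g⁻¹ * h * g) y = y := by
        rcases hgcase with ⟨hg1, hg2⟩ | ⟨hg1, hg2⟩
        · simp only [map_mul, map_inv, Equiv.Perm.mul_apply]
          rw [hg2, hfd₀, ← hg2, Equiv.Perm.inv_eq_iff_eq]
        · simp only [map_mul, map_inv, Equiv.Perm.mul_apply]
          rw [hg2, hfc₀, ← hg2, Equiv.Perm.inv_eq_iff_eq]
      rw [hcomm] at e1
      exact e1
    exact hy''ne (by rw [← hh.2, hyfix])
  · -- no crossing : γ fixes q a
    have hγfz : σ γ (f z) = f z := by rw [← hfe, hzfix]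
    have hedgePT : s(q a, q b) ∈ (tp hTT (f z) (q b)).edges := by
      by_contra hno
      have hsingleT : tp hTT (q a) (q b) = Walk.cons hqadj Walk.nil := by
        symm
        apply tp_eq hTT
        rw [Walk.isPath_def]
        simp [hqadj.ne]
      have hmem : s(q a, q b) ∈
          ((((tp hTY x z).map (ghom' f hfm)).copy hfx rfl).append (tp hTT (f z) (q b))).edges := by
        apply tp_edges_subset hTT
        rw [hsingleT]
        simp
      erw [Walk.edges_append] at hmem
      rcases List.mem_append.mp hmem with hin | hin
      · erw [Walk.edges_copy, Walk.edges_map] at hin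
        obtain ⟨e₀, he₀, heq₀⟩ := List.mem_map.mp hin
        exact hcross ⟨e₀, he₀, heq₀⟩
      · exact hno hin
    have hqas : q a ∈ (tp hTT (f z) (q b)).support :=
      (tp hTT (f z) (q b)).fst_mem_support_of_mem_edges hedgePT
    exact fix_support hTT paT hγfz hσγb (q a) hqas
end
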